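/- Let a ∈ [0,1] and ℓ ∈ L_a. Then for all t ∈ [0,1], ∫₀ᵗ ℓ_a⁺(x) dx ≥ ∫₀ᵗ ℓ(x) dx ≥ ∫₀ᵗ ℓ_a⁻(x) dx. -/

import Mathlib

open Set

/-- Membership in `L`: convex continuous `ℓ : [0,1] → [0,1]` with `ℓ 0 = 0`,
`ℓ 1 = 1`. -/
def MemLorenz (ℓ : ℝ → ℝ) : Prop :=
  ConvexOn ℝ (Icc (0:ℝ) 1) ℓ ∧ ContinuousOn ℓ (Icc (0:ℝ) 1) ∧
    (∀ t ∈ Icc (0:ℝ) 1, ℓ t ∈ Icc (0:ℝ) 1) ∧ ℓ 0 = 0 ∧ ℓ 1 = 1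

/-- The Gini index `G(ℓ) = 1 - 2∫₀¹ ℓ`. -/
noncomputable def Gini (ℓ : ℝ → ℝ) : ℝ := 1 - 2 * ∫ t in (0:ℝ)..1, ℓ t

/-- `ℓ_a⁻(t) = max {0, (t-a)/(1-a)}`. -/
noncomputable def laMinus (a : ℝ) : ℝ → ℝ := fun t => max 0 ((t - a) / (1 - a))

/-- `ℓ_a⁺(t) = (1-a)t` on `[0,1)`, `ℓ_a⁺(1) = 1`. -/
noncomputable def laPlus (a : ℝ) : ℝ → ℝ := fun t => if t = 1 then 1 else (1 - a) * t

open MeasureTheory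


lemma ae_ne_point (c : ℝ) : ∀ᵐ x : ℝ, x ≠ c := by
  rw [MeasureTheory.ae_iff]
  have h : {x : ℝ | ¬ x ≠ c} = {c} := by ext; simp
  rw [h]; exact measure_singleton c

lemma keyA (g : ℝ → ℝ) (hg : ContinuousOn g (Icc 0 1))
    (hH : ∀ x y : ℝ, 0 ≤ x → x ≤ y → y < 1 → g y ≤ 0 → g x ≤ 0)
    (hint : (∫ x in (0:ℝ)..1, g x) = 0)
    {t : ℝ} (ht0 : 0 ≤ t) (ht1 : t ≤ 1) : (∫ x in (0:ℝ)..t, g x) ≤ 0 := by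
  have hintg : ∀ u v : ℝ, 0 ≤ u → u ≤ v → v ≤ 1 → IntervalIntegrable g volume u v := by
    intro u v hu huv hv
    apply (hg.mono ?_).intervalIntegrable
    rw [uIcc_of_le huv]
    exact Icc_subset_Icc hu hv
  set S : Set ℝ := insert 0 {x | 0 ≤ x ∧ x < 1 ∧ g x ≤ 0} with hS
  have hSne : S.Nonempty := ⟨0, mem_insert _ _⟩
  have hSbdd : BddAbove S := by
    refine ⟨1, ?_⟩
    rintro x hx
    rcases mem_insert_iff.mp hx with rfl | ⟨_, hx1, _⟩
    · norm_num
    · exact hx1.le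
  set c := sSup S with hc
  have hc0 : 0 ≤ c := le_csSup hSbdd (mem_insert _ _)
  have hneg : ∀ x : ℝ, 0 ≤ x → x < c → g x ≤ 0 := by
    intro x hx0 hxc
    obtain ⟨s, hs, hxs⟩ := exists_lt_of_lt_csSup hSne hxc
    rcases mem_insert_iff.mp hs with rfl | ⟨_, hs1, hgs⟩
    · linarith
    · exact hH x s hx0 hxs.le hs1 hgs
  have hpos : ∀ x : ℝ, c < x → x < 1 → 0 ≤ g x := by
    intro x hcx hx1
    by_contra hcon
    push_neg at hcon
    have hx : x ∈ S := mem_insert_iff.mpr (Or.inr ⟨le_trans hc0 hcx.le, hx1, hcon.le⟩)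
    exact absurd (le_csSup hSbdd hx) (not_le.mpr hcx)
  rcases le_or_gt t c with h | h
  · have h2 : 0 ≤ ∫ x in (0:ℝ)..t, -g x := by
      apply intervalIntegral.integral_nonneg_of_ae_restrict ht0
      filter_upwards [ae_restrict_of_ae (ae_ne_point c), ae_restrict_mem measurableSet_Icc]
        with x hxc hx
      simp only [Pi.zero_apply]
      have hxlt : x < c := lt_of_le_of_ne (le_trans hx.2 h) hxc
      have := hneg x hx.1 hxlt
      linarith
    rw [intervalIntegral.integral_neg] at h2
    linarith
  · have hadd := intervalIntegral.integral_add_adjacent_intervals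
      (hintg 0 t le_rfl ht0 ht1) (hintg t 1 ht0 ht1 le_rfl)
    have h2 : 0 ≤ ∫ x in t..(1:ℝ), g x := by
      apply intervalIntegral.integral_nonneg_of_ae_restrict ht1
      filter_upwards [ae_restrict_of_ae (ae_ne_point 1), ae_restrict_mem measurableSet_Icc]
        with x hx1 hx
      simp only [Pi.zero_apply]
      exact hpos x (lt_of_lt_of_le h hx.1) (lt_of_le_of_ne hx.2 hx1)
    rw [hint] at hadd
    linarith

/-- For `a ∈ [0,1]`, `ℓ ∈ L_a` and `t ∈ [0,1]`:
`∫₀ᵗ ℓ_a⁺ ≥ ∫₀ᵗ ℓ ≥ ∫₀ᵗ ℓ_a⁻`. -/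
theorem extremal_third_order (a : ℝ) (ha : a ∈ Icc (0:ℝ) 1) (ℓ : ℝ → ℝ)
    (hℓ : MemLorenz ℓ) (hG : Gini ℓ = a) (t : ℝ) (ht : t ∈ Icc (0:ℝ) 1) :
    (∫ x in (0:ℝ)..t, ℓ x) ≤ (∫ x in (0:ℝ)..t, laPlus a x) ∧
    (∫ x in (0:ℝ)..t, laMinus a x) ≤ (∫ x in (0:ℝ)..t, ℓ x) := by
  obtain ⟨hconv, hcont, hrange, h0, h1⟩ := hℓ
  have hint1 : (∫ x in (0:ℝ)..1, ℓ x) = (1 - a)/2 := by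
    unfold Gini at hG; linarith
  have hIℓ : ∀ u v : ℝ, 0 ≤ u → u ≤ v → v ≤ 1 → IntervalIntegrable ℓ volume u v := by
    intro u v hu huv hv
    apply (hcont.mono ?_).intervalIntegrable
    rw [uIcc_of_le huv]
    exact Icc_subset_Icc hu hv
  have hlamc : Continuous (laMinus a) :=
    continuous_const.max ((continuous_id.sub continuous_const).div_const _)
  have hlinc : Continuous (fun x : ℝ => (1 - a) * x) := continuous_const.mul continuous_id
  -- Part 1
  have hA : (∫ x in (0:ℝ)..t, (ℓ x - (1 - a) * x)) ≤ 0 := by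
    apply keyA (fun x => ℓ x - (1 - a) * x) (hcont.sub hlinc.continuousOn) ?_ ?_ ht.1 ht.2
    · intro x y hx hxy hy1 hgy
      by_cases hy0 : y = 0
      · have hx0 : x = 0 := le_antisymm (hy0 ▸ hxy) hx
        simp [hx0, h0]
      have hy0' : 0 < y := lt_of_le_of_ne (le_trans hx hxy) (Ne.symm hy0)
      have hmem0 : (0:ℝ) ∈ Icc (0:ℝ) 1 := by norm_num
      have hmemy : y ∈ Icc (0:ℝ) 1 := ⟨hy0'.le, hy1.le⟩
      have hb : 0 ≤ x / y := div_nonneg hx hy0'.le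
      have ha' : 0 ≤ 1 - x / y := by
        have : x / y ≤ 1 := (div_le_one hy0').mpr hxy
        linarith
      have hcvx := hconv.2 hmem0 hmemy ha' hb (by ring)
      rw [smul_eq_mul, smul_eq_mul, smul_eq_mul, smul_eq_mul] at hcvx
      have hpt : (1 - x / y) * 0 + x / y * y = x := by
        field_simp; ring
      rw [hpt, h0] at hcvx
      -- hcvx : ℓ x ≤ (1 - x/y) * 0 + x/y * ℓ y
      have hxyy : x / y * y = x := div_mul_cancel₀ x hy0'.ne'
      have hly : ℓ y ≤ (1 - a) * y := by linarith
      have : x / y * ℓ y ≤ x / y * ((1 - a) * y) := mul_le_mul_of_nonneg_left hly hb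
      have e : x / y * ((1 - a) * y) = (1 - a) * x := by
        field_simp
      nlinarith
    · have e2 : (∫ x in (0:ℝ)..1, (1 - a) * x) = (1 - a)/2 := by
        rw [intervalIntegral.integral_const_mul, integral_id]; ring
      rw [intervalIntegral.integral_sub (hIℓ 0 1 le_rfl zero_le_one le_rfl)
        (hlinc.intervalIntegrable _ _), hint1, e2]
      ring
  have hP : (∫ x in (0:ℝ)..t, laPlus a x) = ∫ x in (0:ℝ)..t, (1 - a) * x := by
    apply intervalIntegral.integral_congr_ae
    filter_upwards [ae_ne_point 1] with x hx1 _
    simp [laPlus, hx1]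
  rw [intervalIntegral.integral_sub (hIℓ 0 t le_rfl ht.1 ht.2)
    (hlinc.intervalIntegrable _ _)] at hA
  constructor
  · rw [hP]; linarith
  -- Part 2
  have hm : (∫ x in (0:ℝ)..1, laMinus a x) = (1 - a)/2 := by
    rcases eq_or_lt_of_le ha.2 with h1' | h1'
    · simp [laMinus, h1', div_zero]
    · have h1a : 0 < 1 - a := by linarith
      have e1 : (∫ x in (0:ℝ)..a, laMinus a x) = 0 := by
        rw [intervalIntegral.integral_congr (g := fun _ => (0:ℝ)) ?_]
        · simp
        · intro x hx
          rw [uIcc_of_le ha.1] at hx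
          have hd : (x - a)/(1 - a) ≤ 0 :=
            div_nonpos_iff.mpr (Or.inr ⟨by linarith [hx.2], h1a.le⟩)
          simp [laMinus, max_eq_left hd]
      have e2 : (∫ x in a..(1:ℝ), laMinus a x) = (1 - a)/2 := by
        rw [intervalIntegral.integral_congr (g := fun x => (x - a)/(1 - a)) ?_]
        · rw [intervalIntegral.integral_div,
            intervalIntegral.integral_sub (intervalIntegral.intervalIntegrable_id) intervalIntegrable_const,
            integral_id, intervalIntegral.integral_const]
          field_simp
          ring
        · intro x hx
          rw [uIcc_of_le ha.2] at hx
          exact max_eq_right (div_nonneg (by linarith [hx.1]) h1a.le)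
      have := intervalIntegral.integral_add_adjacent_intervals
        ((hlamc.intervalIntegrable (μ := volume) 0 a)) ((hlamc.intervalIntegrable (μ := volume) a 1))
      rw [e1, e2] at this
      linarith
  have hB : (∫ x in (0:ℝ)..t, (laMinus a x - ℓ x)) ≤ 0 := by
    apply keyA (fun x => laMinus a x - ℓ x) (hlamc.continuousOn.sub hcont) ?_ ?_ ht.1 ht.2
    · intro x y hx0 hxy hy1 hgy
      have hxI : x ∈ Icc (0:ℝ) 1 := ⟨hx0, by linarith⟩
      by_cases hcase : a < x ∧ a < 1
      · obtain ⟨hax, ha1⟩ := hcase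
        have h1a : 0 < 1 - a := by linarith
        have h1x : 0 < 1 - x := by linarith
        have h1y : 0 < 1 - y := by linarith
        have lx : laMinus a x = (x - a)/(1 - a) :=
          max_eq_right (div_nonneg (by linarith) h1a.le)
        have ly : laMinus a y = (y - a)/(1 - a) :=
          max_eq_right (div_nonneg (by linarith) h1a.le)
        rw [lx]
        rw [ly] at hgy
        have hmem1 : (1:ℝ) ∈ Icc (0:ℝ) 1 := by norm_num
        have hb : 0 ≤ (y - x)/(1 - x) := div_nonneg (by linarith) h1x.le
        have ha' : 0 ≤ (1 - y)/(1 - x) := div_nonneg h1y.le h1x.le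
        have hab : (1 - y)/(1 - x) + (y - x)/(1 - x) = 1 := by
          field_simp; ring
        have hcvx := hconv.2 hxI hmem1 ha' hb hab
        rw [smul_eq_mul, smul_eq_mul, smul_eq_mul, smul_eq_mul] at hcvx
        have hpt : (1 - y)/(1 - x) * x + (y - x)/(1 - x) * 1 = y := by
          field_simp; ring
        rw [hpt, h1] at hcvx
        -- hcvx : ℓ y ≤ (1-y)/(1-x) * ℓ x + (y-x)/(1-x) * 1
        set L := ℓ x with hL
        have hc2 : (y - a)/(1 - a) ≤ ((1 - y) * L + (y - x))/(1 - x) := by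
          have e : (1 - y)/(1 - x) * L + (y - x)/(1 - x) * 1
              = ((1 - y) * L + (y - x))/(1 - x) := by ring
          linarith [hcvx, e ▸ hcvx]
        rw [div_le_div_iff₀ h1a h1x] at hc2
        have h5 : (x - a) * (1 - y) ≤ (L * (1 - a)) * (1 - y) := by nlinarith [hc2]
        have h6 : x - a ≤ L * (1 - a) := le_of_mul_le_mul_right h5 h1y
        have : (x - a)/(1 - a) ≤ L := (div_le_iff₀ h1a).mpr (by linarith)
        linarith
      · have lx : laMinus a x = 0 := by
          rcases lt_or_ge a 1 with hA1 | hA1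
          · have hxa : x ≤ a := by
              rcases not_and_or.mp hcase with hcc | hcc
              · exact not_lt.mp hcc
              · exact absurd hA1 hcc
            exact max_eq_left (div_nonpos_iff.mpr (Or.inr ⟨by linarith, by linarith⟩))
          · have haa : a = 1 := le_antisymm ha.2 hA1
            simp [laMinus, haa, div_zero]
        have := (hrange x hxI).1
        rw [lx]; linarith
    · rw [intervalIntegral.integral_sub (hlamc.intervalIntegrable _ _)
        (hIℓ 0 1 le_rfl zero_le_one le_rfl), hm, hint1]
      ring
  rw [intervalIntegral.integral_sub (hlamc.intervalIntegrable _ _)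
    (hIℓ 0 t le_rfl ht.1 ht.2)] at hB
  linarith
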